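/- Let C be a convex body in ℝ^d, and let k be a positive integer such that the difference body C − C can be covered by k translates of C. Then for every finite family F of positive homothets of C, τ(F) ≤ k · ν(F). -/

import Mathlib

open Pointwise

private lemma key_lemma' {d k : ℕ} {C : Set (EuclideanSpace ℝ (Fin d))} (hCconv : Convex ℝ C)
    {vs : Fin k → EuclideanSpace ℝ (Fin d)} (hcov : C - C ⊆ ⋃ i, vs i +ᵥ C)
    {lam mu : ℝ} {v v' x : EuclideanSpace ℝ (Fin d)}
    (hlam : 0 < lam) (hle : lam ≤ mu)
    (hx1 : x ∈ v +ᵥ lam • C) (hx2 : x ∈ v' +ᵥ mu • C) :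
    ∃ i, v - lam • vs i ∈ v' +ᵥ mu • C := by
  have hmu : 0 < mu := hlam.trans_le hle
  obtain ⟨y, hy, hxy⟩ := Set.mem_vadd_set.mp hx1
  obtain ⟨c, hc, rfl⟩ := Set.mem_smul_set.mp hy
  obtain ⟨y', hy', hxy'⟩ := Set.mem_vadd_set.mp hx2
  obtain ⟨c', hc', rfl⟩ := Set.mem_smul_set.mp hy'
  have hdiff : c' - c ∈ C - C := Set.sub_mem_sub hc' hc
  obtain ⟨i, hi⟩ := Set.mem_iUnion.mp (hcov hdiff)
  obtain ⟨u, hu, huv⟩ := Set.mem_vadd_set.mp hi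
  refine ⟨i, ?_⟩
  set z := ((mu - lam)/mu) • c' + (lam/mu) • u with hz_def
  have hz : z ∈ C := hCconv hc' hu (div_nonneg (by linarith) hmu.le)
    (div_nonneg hlam.le hmu.le) (by field_simp; ring)
  refine Set.mem_vadd_set.mpr ⟨mu • z, Set.smul_mem_smul_set hz, ?_⟩
  have hmuz : mu • z = (mu - lam) • c' + lam • u := by
    rw [hz_def, smul_add, smul_smul, smul_smul, mul_div_cancel₀ _ hmu.ne',
      mul_div_cancel₀ _ hmu.ne']
  have hv : v + lam • c = v' + mu • c' := by
    rw [← vadd_eq_add, ← vadd_eq_add, hxy, hxy']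
  have hvs : vs i + u = c' - c := by rw [← vadd_eq_add, huv]
  have hvsi : vs i = c' - c - u := by rw [← hvs]; abel
  rw [vadd_eq_add, hmuz, hvsi]
  have hveq : v = v' + mu • c' - lam • c := by rw [← hv]; abel
  rw [hveq]
  module

private lemma aux_induction {d k : ℕ} {C : Set (EuclideanSpace ℝ (Fin d))}
    (hCconv : Convex ℝ C) (hCne : C.Nonempty)
    {vs : Fin k → EuclideanSpace ℝ (Fin d)} (hcov : C - C ⊆ ⋃ i, vs i +ᵥ C)
    (S : Finset (ℝ × EuclideanSpace ℝ (Fin d)))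
    (hS : ∀ s ∈ S, 0 < s.1) :
    ∃ (P : Finset (EuclideanSpace ℝ (Fin d))) (W : Finset (ℝ × EuclideanSpace ℝ (Fin d))),
      W ⊆ S ∧
      (∀ s ∈ S, ∃ x ∈ P, x ∈ s.2 +ᵥ s.1 • C) ∧
      ((W : Set (ℝ × EuclideanSpace ℝ (Fin d))).Pairwise fun s s' =>
        Disjoint (s.2 +ᵥ s.1 • C) (s'.2 +ᵥ s'.1 • C)) ∧
      P.card ≤ k * W.card := by
  classical
  induction S using Finset.strongInduction with
  | _ S ih =>
  rcases S.eq_empty_or_nonempty with rfl | hne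
  · exact ⟨∅, ∅, Finset.Subset.refl _, by simp, by simp, by simp⟩
  obtain ⟨s, hs, hmin⟩ := S.exists_min_image Prod.fst hne
  have hbody_ne : (s.2 +ᵥ s.1 • C).Nonempty := hCne.smul_set.vadd_set
  set S₂ := S.filter (fun t => Disjoint (t.2 +ᵥ t.1 • C) (s.2 +ᵥ s.1 • C)) with hS₂def
  have hsS₂ : s ∉ S₂ := by
    intro h
    exact hbody_ne.ne_empty (disjoint_self.mp (Finset.mem_filter.mp h).2)
  have hssub : S₂ ⊂ S := ⟨Finset.filter_subset _ _, fun h => hsS₂ (h hs)⟩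
  obtain ⟨P₂, W₂, hW₂S, hpierce₂, hdisj₂, hcard₂⟩ :=
    ih S₂ hssub (fun t ht => hS t (Finset.filter_subset _ _ ht))
  refine ⟨P₂ ∪ Finset.image (fun i => s.2 - s.1 • vs i) Finset.univ, insert s W₂,
    ?_, ?_, ?_, ?_⟩
  · exact Finset.insert_subset hs (hW₂S.trans (Finset.filter_subset _ _))
  · intro t ht
    by_cases htS₂ : t ∈ S₂
    · obtain ⟨x, hxP, hxt⟩ := hpierce₂ t htS₂
      exact ⟨x, Finset.mem_union_left _ hxP, hxt⟩
    · have hnd : ¬ Disjoint (t.2 +ᵥ t.1 • C) (s.2 +ᵥ s.1 • C) := fun h =>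
        htS₂ (Finset.mem_filter.mpr ⟨ht, h⟩)
      obtain ⟨x, hxt, hxs⟩ := Set.not_disjoint_iff.mp hnd
      obtain ⟨i, hi⟩ := key_lemma' hCconv hcov (hS s hs) (hmin t ht) hxs hxt
      exact ⟨s.2 - s.1 • vs i,
        Finset.mem_union_right _ (Finset.mem_image.mpr ⟨i, Finset.mem_univ _, rfl⟩), hi⟩
  · rw [Finset.coe_insert]
    refine Set.Pairwise.insert hdisj₂ ?_
    intro t ht _
    have htS₂ : t ∈ S₂ := hW₂S ht
    have := (Finset.mem_filter.mp htS₂).2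
    exact ⟨this.symm, this⟩
  · calc (P₂ ∪ Finset.image (fun i => s.2 - s.1 • vs i) Finset.univ).card
        ≤ P₂.card + (Finset.image (fun i => s.2 - s.1 • vs i) (Finset.univ : Finset (Fin k))).card :=
          Finset.card_union_le _ _
      _ ≤ k * W₂.card + k := by
          have := (Finset.card_image_le (s := (Finset.univ : Finset (Fin k)))
            (f := fun i => s.2 - s.1 • vs i))
          simp only [Finset.card_univ, Fintype.card_fin] at this
          omega
      _ ≤ k * (insert s W₂).card := by
          rw [Finset.card_insert_of_notMem (fun h => hsS₂ (hW₂S h))]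
          ring_nf
          omega

/-- Let `C` be a convex body in `ℝ^d` whose difference body `C − C` can be covered by `k`
translates of `C`. Then for every finite family of positive homothets of `C` (indexed by
pairs `(λ, v)` with `λ > 0`, the homothet being `λ • C + v`), `τ(F) ≤ k · ν(F)`. -/
theorem piercing_homothets_difference_body_bound
    (d : ℕ)
    (C : Set (EuclideanSpace ℝ (Fin d)))
    (hCcompact : IsCompact C) (hCconv : Convex ℝ C) (hCint : (interior C).Nonempty)
    (k : ℕ) (hk : 0 < k)
    (hcov : ∃ v : Fin k → EuclideanSpace ℝ (Fin d), C - C ⊆ ⋃ i, v i +ᵥ C)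
    (S : Finset (ℝ × EuclideanSpace ℝ (Fin d)))
    (hS : ∀ s ∈ S, 0 < s.1) :
    ∃ (P : Finset (EuclideanSpace ℝ (Fin d))) (W : Finset (ℝ × EuclideanSpace ℝ (Fin d))),
      W ⊆ S ∧
      (∀ s ∈ S, ∃ x ∈ P, x ∈ s.2 +ᵥ s.1 • C) ∧
      ((W : Set (ℝ × EuclideanSpace ℝ (Fin d))).Pairwise fun s s' =>
        Disjoint (s.2 +ᵥ s.1 • C) (s'.2 +ᵥ s'.1 • C)) ∧
      P.card ≤ k * W.card := by
  obtain ⟨vs, hcov⟩ := hcov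
  obtain ⟨x, hx⟩ := hCint
  exact aux_induction hCconv ⟨x, interior_subset hx⟩ hcov S hS
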